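/- Let f : ℝ → ℝ be Lipschitz with constant L ≥ 0, let K ≥ 1 be an integer, let δ ∈ [0, 1], and let t > 0. Let q_0 ≤ q_1 ≤ ... ≤ q_K be real numbers defining intervals I_k = (q_{k−1}, q_k] for k = 1, ..., K, and suppose that for every k, ∫_{q_{k−1}}^{q_k} f(y) dy ≥ (1 − δ)/K. Then the union of the short intervals is contained in the corresponding super-level set of f: ⋃ { I_k : q_k − q_{k−1} ≤ t, 1 ≤ k ≤ K } ⊆ { y ∈ ℝ : f(y) ≥ (1 − δ)/(K t) − L t / 2 }. -/

import Mathlib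

open MeasureTheory Set

set_option maxHeartbeats 1000000 in
/-- **Prediction set theorem (for a fixed feature value).** Let `f` be Lipschitz
with constant `L ≥ 0` (the conditional density), let `q 0 ≤ q 1 ≤ … ≤ q K` be
estimated quantiles defining interquantile intervals `I k = (q (k−1), q k]`, each
carrying mass at least `(1 − δ)/K`. Then the union of the intervals of length at
most `t` (the CTI prediction set) is contained in the super-level set
`{y : f y ≥ (1 − δ)/(K t) − L t / 2}`. -/
theorem cti_prediction_set_subset (f : ℝ → ℝ) (L : ℝ) (hL : 0 ≤ L)
    (hf : ∀ u v : ℝ, |f u - f v| ≤ L * |u - v|)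
    (K : ℕ) (hK : 1 ≤ K) (δ : ℝ) (hδ : δ ∈ Set.Icc (0 : ℝ) 1) (t : ℝ) (ht : 0 < t)
    (q : Fin (K + 1) → ℝ) (hq : Monotone q)
    (hmass : ∀ k : Fin K,
      (1 - δ) / (K : ℝ) ≤ ∫ y in Set.Ioc (q k.castSucc) (q k.succ), f y) :
    (⋃ k ∈ {k : Fin K | q k.succ - q k.castSucc ≤ t},
        Set.Ioc (q k.castSucc) (q k.succ))
      ⊆ {y : ℝ | (1 - δ) / ((K : ℝ) * t) - L * t / 2 ≤ f y} := by
  -- continuity of f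
  have hfc : Continuous f := by
    have : LipschitzWith L.toNNReal f := by
      intro u v
      rw [edist_dist, edist_dist, dist_eq_norm]
      have := hf u v
      rw [Real.norm_eq_abs]
      calc ENNReal.ofReal |f u - f v| ≤ ENNReal.ofReal (L * |u - v|) :=
            ENNReal.ofReal_le_ofReal (hf u v)
        _ = L.toNNReal * ENNReal.ofReal |u - v| := by
            rw [ENNReal.ofReal_mul hL]; rfl
        _ = L.toNNReal * ENNReal.ofReal (dist u v) := by rw [Real.dist_eq]
    exact this.continuous
  intro y hy
  simp only [Set.mem_iUnion, Set.mem_setOf_eq] at hy ⊢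
  obtain ⟨k, hkt, hyk⟩ := hy
  have hmassk := hmass k
  have hab' : q k.castSucc ≤ q k.succ := hq (Fin.castSucc_le_succ k)
  set a := q k.castSucc with ha
  set b := q k.succ with hb
  clear_value a b
  clear hmass hq ha hb
  have hab : a ≤ b := hab'
  obtain ⟨hay, hyb⟩ := hyk
  have hℓpos : 0 < b - a := by linarith
  -- integrability
  have hint1 : IntegrableOn f (Set.Ioc a b) := hfc.integrableOn_Ioc
  have hgc : Continuous (fun z : ℝ => f y + L * |z - y|) := by continuity
  have hint2 : IntegrableOn (fun z : ℝ => f y + L * |z - y|) (Set.Ioc a b) :=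
    hgc.integrableOn_Ioc
  -- pointwise bound
  have h1 : ∫ z in Set.Ioc a b, f z ≤ ∫ z in Set.Ioc a b, (f y + L * |z - y|) := by
    apply setIntegral_mono_on hint1 hint2 measurableSet_Ioc
    intro z hz
    have := hf z y
    have := abs_le.mp (hf z y)
    linarith [this.2]
  -- compute RHS
  have habs : ∫ z in Set.Ioc a b, |z - y| ≤ (b - a)^2 / 2 := by
    rw [← intervalIntegral.integral_of_le hab]
    have hsplit : ∫ z in a..b, |z - y| = (∫ z in a..y, |z - y|) + ∫ z in y..b, |z - y| := by
      rw [intervalIntegral.integral_add_adjacent_intervals] <;>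
        exact (by continuity : Continuous fun z : ℝ => |z - y|).intervalIntegrable _ _
    have hI1 : ∫ z in a..y, |z - y| = (y - a)^2 / 2 := by
      have : ∫ z in a..y, |z - y| = ∫ z in a..y, (y - z) := by
        apply intervalIntegral.integral_congr
        intro z hz
        rw [Set.uIcc_of_le hay.le] at hz
        show |z - y| = y - z
        rw [abs_sub_comm, abs_of_nonneg (by linarith [hz.2])]
      rw [this, intervalIntegral.integral_sub intervalIntegrable_const (continuous_id'.intervalIntegrable _ _),
        intervalIntegral.integral_const, integral_id, smul_eq_mul]
      ring
    have hI2 : ∫ z in y..b, |z - y| = (b - y)^2 / 2 := by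
      have : ∫ z in y..b, |z - y| = ∫ z in y..b, (z - y) := by
        apply intervalIntegral.integral_congr
        intro z hz
        rw [Set.uIcc_of_le hyb] at hz
        show |z - y| = z - y
        rw [abs_of_nonneg (by linarith [hz.1])]
      rw [this, intervalIntegral.integral_sub (continuous_id'.intervalIntegrable _ _) intervalIntegrable_const,
        intervalIntegral.integral_const, integral_id, smul_eq_mul]
      ring
    rw [hsplit, hI1, hI2]
    nlinarith [mul_nonneg (sub_nonneg.mpr hay.le) (sub_nonneg.mpr hyb)]
  have h2 : ∫ z in Set.Ioc a b, (f y + L * |z - y|)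
      = (b - a) * f y + L * ∫ z in Set.Ioc a b, |z - y| := by
    rw [integral_add (integrableOn_const (C := f y) measure_Ioc_lt_top.ne)
      ((by continuity : Continuous fun z : ℝ => L * |z - y|).integrableOn_Ioc),
      setIntegral_const, integral_const_mul, Real.volume_real_Ioc_of_le hab,
      smul_eq_mul]
  have hKpos : (0 : ℝ) < K := by exact_mod_cast hK
  have h1δ : 0 ≤ 1 - δ := by linarith [hδ.2]
  have hmain : (1 - δ) / K ≤ (b - a) * f y + L * ((b - a)^2 / 2) := by
    calc (1 - δ) / K ≤ ∫ z in Set.Ioc a b, f z := hmassk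
      _ ≤ ∫ z in Set.Ioc a b, (f y + L * |z - y|) := h1
      _ = (b - a) * f y + L * ∫ z in Set.Ioc a b, |z - y| := h2
      _ ≤ (b - a) * f y + L * ((b - a)^2 / 2) := by
        have := mul_le_mul_of_nonneg_left habs hL
        linarith
  -- final algebra: (1-δ)/(K*t) - L*t/2 ≤ f y
  have hstep : (1 - δ) / (K * (b - a)) - L * (b - a) / 2 ≤ f y := by
    have h : (1 - δ) / K / (b - a) ≤ f y + L * (b - a) / 2 := by
      rw [div_le_iff₀ hℓpos]
      nlinarith [hmain]
    rw [div_div] at h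
    linarith
  have hmono : (1 - δ) / (K * t) - L * t / 2
      ≤ (1 - δ) / (K * (b - a)) - L * (b - a) / 2 := by
    have hKt : (K : ℝ) * (b - a) ≤ K * t := mul_le_mul_of_nonneg_left hkt hKpos.le
    have h1 : (1 - δ) / (K * t) ≤ (1 - δ) / (K * (b - a)) :=
      div_le_div_of_nonneg_left h1δ (by positivity) hKt
    have h2 : L * (b - a) / 2 ≤ L * t / 2 := by
      have := mul_le_mul_of_nonneg_left hkt hL
      linarith
    linarith
  linarith
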